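/- Under the stated hypotheses (Kantorovich), the Newton iterates x_{k+1} = x_k − [P'(x_k)]⁻¹ P(x_k) starting from x₀ are well defined (in particular each P'(x_k) has a bounded linear inverse), remain in the closed ball Ω* = {x : ‖x − x₀‖ ≤ 2η}, and converge to a point x* ∈ Ω* satisfying P(x*) = 0; moreover, for every k ≥ 0, ‖x* − x_k‖ ≤ (η/h) · (2h)^{2^k} / 2^k. -/

import Mathlib

open Set

lemma taylor_bound {X Y : Type*} [NormedAddCommGroup X] [NormedSpace ℝ X]
    [NormedAddCommGroup Y] [NormedSpace ℝ Y]
    (P : X → Y) (P' : X → X →L[ℝ] Y) {s : Set X} (hs : Convex ℝ s)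
    (hd : ∀ z ∈ s, HasFDerivAt P (P' z) z) {K : ℝ}
    (hL : ∀ u ∈ s, ∀ v ∈ s, ‖P' u - P' v‖ ≤ K * ‖u - v‖)
    {a b : X} (ha : a ∈ s) (hb : b ∈ s) :
    ‖P b - P a - P' a (b - a)‖ ≤ K / 2 * ‖b - a‖ ^ 2 := by
  set v := b - a with hv
  have hmem : ∀ t : ℝ, t ∈ Icc (0:ℝ) 1 → a + t • v ∈ s := by
    intro t ht
    have h1 : a + t • v = (1 - t) • a + t • b := by
      rw [hv, smul_sub, sub_smul, one_smul]; abel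
    rw [h1]
    exact hs ha hb (by linarith [ht.2]) ht.1 (by ring)
  have hderivφ : ∀ t ∈ Icc (0:ℝ) 1,
      HasDerivAt (fun t : ℝ => P (a + t • v) - P a - t • (P' a v))
        ((P' (a + t • v)) v - P' a v) t := by
    intro t ht
    have h1 : HasDerivAt (fun t : ℝ => a + t • v) v t := by
      simpa using ((hasDerivAt_id t).smul_const v).const_add a
    have h2 : HasDerivAt (fun t : ℝ => P (a + t • v)) (P' (a + t • v) v) t :=
      (hd _ (hmem t ht)).comp_hasDerivAt t h1
    exact (h2.sub_const (P a)).sub (((hasDerivAt_id t).smul_const (P' a v)).congr_deriv (one_smul _ _))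
  have hcont : ContinuousOn (fun t : ℝ => P (a + t • v) - P a - t • (P' a v)) (Icc 0 1) :=
    fun t ht => (hderivφ t ht).continuousAt.continuousWithinAt
  have hB : ∀ t : ℝ, HasDerivAt (fun t : ℝ => K / 2 * ‖v‖ ^ 2 * t ^ 2)
      (K / 2 * ‖v‖ ^ 2 * (2 * t)) t := by
    intro t
    have := (hasDerivAt_pow 2 t).const_mul (K / 2 * ‖v‖ ^ 2)
    simpa [pow_one] using this
  have bound : ∀ t ∈ Ico (0:ℝ) 1,
      ‖(P' (a + t • v)) v - P' a v‖ ≤ K / 2 * ‖v‖ ^ 2 * (2 * t) := by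
    intro t ht
    have h1 : (P' (a + t • v)) v - P' a v = (P' (a + t • v) - P' a) v := by
      simp [ContinuousLinearMap.sub_apply]
    rw [h1]
    have h2 : ‖(P' (a + t • v) - P' a) v‖ ≤ ‖P' (a + t • v) - P' a‖ * ‖v‖ :=
      (P' (a + t • v) - P' a).le_opNorm v
    have h3 : ‖P' (a + t • v) - P' a‖ ≤ K * ‖a + t • v - a‖ :=
      hL _ (hmem t (Ico_subset_Icc_self ht)) a ha
    have h4 : ‖a + t • v - a‖ = t * ‖v‖ := by
      rw [add_sub_cancel_left, norm_smul, Real.norm_eq_abs, abs_of_nonneg ht.1]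
    calc ‖(P' (a + t • v) - P' a) v‖ ≤ ‖P' (a + t • v) - P' a‖ * ‖v‖ := h2
      _ ≤ (K * (t * ‖v‖)) * ‖v‖ := by
          rw [← h4]; exact mul_le_mul_of_nonneg_right h3 (norm_nonneg _)
      _ = K / 2 * ‖v‖ ^ 2 * (2 * t) := by ring
  have key := image_norm_le_of_norm_deriv_right_le_deriv_boundary hcont
      (fun t ht => (hderivφ t (Ico_subset_Icc_self ht)).hasDerivWithinAt)
      (by simp) hB bound (right_mem_Icc.2 zero_le_one)
  have h5 : P (a + (1:ℝ) • v) - P a - (1:ℝ) • (P' a v) = P b - P a - P' a (b - a) := by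
    rw [one_smul, one_smul, hv, add_sub_cancel]
  rw [h5] at key
  rw [one_pow, mul_one] at key
  exact key

open Set Metric

structure NGood {X Y : Type*} [NormedAddCommGroup X] [NormedSpace ℝ X]
    [NormedAddCommGroup Y] [NormedSpace ℝ Y]
    (P : X → Y) (P' : X → X →L[ℝ] Y) (x₀ : X) (K η : ℝ)
    (x : X) (i : Y →L[ℝ] X) (b e : ℝ) : Prop where
  compl : i.comp (P' x) = ContinuousLinearMap.id ℝ X
  compr : (P' x).comp i = ContinuousLinearMap.id ℝ Y
  normi : ‖i‖ ≤ b
  normie : ‖i (P x)‖ ≤ e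
  bpos : 0 < b
  enonneg : 0 ≤ e
  shalf : b * K * e ≤ 1/2
  inball : ‖x - x₀‖ + 2*e ≤ 2*η

set_option maxHeartbeats 1000000 in
lemma newton_step {X Y : Type*} [NormedAddCommGroup X] [NormedSpace ℝ X] [CompleteSpace X]
    [NormedAddCommGroup Y] [NormedSpace ℝ Y]
    (P : X → Y) (P' : X → X →L[ℝ] Y) (x₀ : X) {K η : ℝ} (hK : 0 < K)
    (hd : ∀ z ∈ closedBall x₀ (2*η), HasFDerivAt P (P' z) z)
    (hL : ∀ u ∈ closedBall x₀ (2*η), ∀ w ∈ closedBall x₀ (2*η), ‖P' u - P' w‖ ≤ K * ‖u - w‖)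
    (x : X) (i : Y →L[ℝ] X) (b e : ℝ)
    (hg : NGood P P' x₀ K η x i b e) :
    ∃ i' : Y →L[ℝ] X, NGood P P' x₀ K η (x - i (P x)) i'
      (b / (1 - b*K*e)) (K/2 * (b / (1 - b*K*e)) * e^2) := by
  obtain ⟨hl, hr, hib, hie, hb0, he0, hs2, hball⟩ := hg
  have hs0 : 0 ≤ b*K*e := mul_nonneg (mul_nonneg hb0.le hK.le) he0
  have hd2 : (1:ℝ)/2 ≤ 1 - b*K*e := by linarith
  have hη2 : 0 ≤ 2*η := le_trans (by positivity) hball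
  have hxmem : x ∈ closedBall x₀ (2*η) := by
    rw [Metric.mem_closedBall, dist_eq_norm]; linarith [norm_nonneg (x - x₀)]
  set x' := x - i (P x) with hx'def
  have hsub : x' - x = -(i (P x)) := by rw [hx'def]; abel
  have hxx' : ‖x' - x‖ ≤ e := by rw [hsub, norm_neg]; exact hie
  have hx'b : ‖x' - x₀‖ ≤ ‖x - x₀‖ + e := by
    calc ‖x' - x₀‖ = ‖(x' - x) + (x - x₀)‖ := by abel_nf
      _ ≤ ‖x' - x‖ + ‖x - x₀‖ := norm_add_le _ _
      _ ≤ ‖x - x₀‖ + e := by linarith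
  have hx'mem : x' ∈ closedBall x₀ (2*η) := by
    rw [Metric.mem_closedBall, dist_eq_norm]; linarith
  set T := i.comp (P' x') with hTdef
  have hnT : ‖(1 : X →L[ℝ] X) - T‖ ≤ b*K*e := by
    have hT1 : (1 : X →L[ℝ] X) - T = i.comp (P' x - P' x') := by
      rw [ContinuousLinearMap.comp_sub, hl, ContinuousLinearMap.one_def]
    have h1 : ‖P' x - P' x'‖ ≤ K * e := by
      refine (hL x hxmem x' hx'mem).trans ?_
      rw [norm_sub_rev]
      exact mul_le_mul_of_nonneg_left hxx' hK.le
    rw [hT1]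
    calc ‖i.comp (P' x - P' x')‖ ≤ ‖i‖ * ‖P' x - P' x'‖ :=
          ContinuousLinearMap.opNorm_comp_le _ _
      _ ≤ b * (K * e) := mul_le_mul hib h1 (norm_nonneg _) hb0.le
      _ = b*K*e := (mul_assoc _ _ _).symm
  have hnTlt : ‖(1 : X →L[ℝ] X) - T‖ < 1 := lt_of_le_of_lt hnT (by linarith)
  set u : (X →L[ℝ] X)ˣ := Units.oneSub ((1 : X →L[ℝ] X) - T) hnTlt with hudef
  have huval : (u : X →L[ℝ] X) = T := by
    rw [hudef, Units.val_oneSub, sub_sub_cancel]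
  have hidl : (↑u⁻¹ : X →L[ℝ] X).comp T = ContinuousLinearMap.id ℝ X := by
    rw [← huval, ← ContinuousLinearMap.mul_def, u.inv_mul, ContinuousLinearMap.one_def]
  have hidr : T.comp (↑u⁻¹ : X →L[ℝ] X) = ContinuousLinearMap.id ℝ X := by
    rw [← huval, ← ContinuousLinearMap.mul_def, u.mul_inv, ContinuousLinearMap.one_def]
  have hinv_norm : ‖(↑u⁻¹ : X →L[ℝ] X)‖ ≤ (1 - b*K*e)⁻¹ := by
    have h3 : (↑u⁻¹ : X →L[ℝ] X) = ∑' n : ℕ, ((1 : X →L[ℝ] X) - T)^n := rfl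
    rw [h3]
    have h4 := tsum_geometric_le_of_norm_lt_one _ hnTlt
    have h5 : ‖(1 : X →L[ℝ] X)‖ ≤ 1 := by
      rw [ContinuousLinearMap.one_def]; exact ContinuousLinearMap.norm_id_le
    have h6 : (1 - ‖(1 : X →L[ℝ] X) - T‖)⁻¹ ≤ (1 - b*K*e)⁻¹ := by
      apply inv_anti₀ (by linarith) (by linarith)
    linarith
  have hib' : ‖(↑u⁻¹ : X →L[ℝ] X).comp i‖ ≤ b / (1 - b*K*e) := by
    calc ‖(↑u⁻¹ : X →L[ℝ] X).comp i‖ ≤ ‖(↑u⁻¹ : X →L[ℝ] X)‖ * ‖i‖ :=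
          ContinuousLinearMap.opNorm_comp_le _ _
      _ ≤ (1 - b*K*e)⁻¹ * b := mul_le_mul hinv_norm hib (norm_nonneg _) (by positivity)
      _ = b / (1 - b*K*e) := by rw [div_eq_mul_inv, mul_comm]
  have hPx' : ‖P x'‖ ≤ K/2 * e^2 := by
    have htay := taylor_bound P P' (convex_closedBall x₀ (2*η)) hd hL hxmem hx'mem
    have h4 : P' x (x' - x) = -(P x) := by
      rw [hsub, map_neg]
      congr 1
      have h5 := congrArg (fun f : Y →L[ℝ] Y => f (P x)) hr
      simpa using h5
    have h6 : P x' - P x - P' x (x' - x) = P x' := by rw [h4]; abel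
    rw [h6] at htay
    refine htay.trans ?_
    exact mul_le_mul_of_nonneg_left (pow_le_pow_left₀ (norm_nonneg _) hxx' 2) (by positivity)
  have hie' : ‖((↑u⁻¹ : X →L[ℝ] X).comp i) (P x')‖ ≤ K/2 * (b / (1 - b*K*e)) * e^2 := by
    calc ‖((↑u⁻¹ : X →L[ℝ] X).comp i) (P x')‖
        ≤ ‖(↑u⁻¹ : X →L[ℝ] X).comp i‖ * ‖P x'‖ := ContinuousLinearMap.le_opNorm _ _
      _ ≤ (b / (1 - b*K*e)) * (K/2 * e^2) := by
          apply mul_le_mul hib' hPx' (norm_nonneg _) (by positivity)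
      _ = K/2 * (b / (1 - b*K*e)) * e^2 := by ring
  have hP'x' : (P' x).comp T = P' x' := by
    rw [hTdef, ← ContinuousLinearMap.comp_assoc, hr, ContinuousLinearMap.id_comp]
  refine ⟨(↑u⁻¹ : X →L[ℝ] X).comp i, ?_, ?_, hib', hie', by positivity, by positivity, ?_, ?_⟩
  · rw [ContinuousLinearMap.comp_assoc, ← hTdef]
    exact hidl
  · have h7 : (P' x').comp ((↑u⁻¹ : X →L[ℝ] X).comp i) = (P' x).comp i := by
      rw [← hP'x', ContinuousLinearMap.comp_assoc, ← ContinuousLinearMap.comp_assoc T,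
        hidr, ContinuousLinearMap.id_comp]
    rw [h7, hr]
  · -- b' * K * e' ≤ 1/2
    have h8 : b / (1 - b*K*e) * K * (K/2 * (b / (1 - b*K*e)) * e^2)
        = (b*K*e)^2 / (2 * (1 - b*K*e)^2) := by
      field_simp
    rw [h8, div_le_iff₀ (by positivity)]
    nlinarith
  · -- ball invariant
    have h9 : 2 * (K/2 * (b / (1 - b*K*e)) * e^2) ≤ e := by
      have h10 : 2 * (K/2 * (b / (1 - b*K*e)) * e^2) = (b*K*e) * e / (1 - b*K*e) := by
        field_simp
      rw [h10, div_le_iff₀ (by linarith)]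
      nlinarith [mul_nonneg hs0 he0]
    linarith

lemma newton_seq {X Y : Type*} [NormedAddCommGroup X] [NormedSpace ℝ X] [CompleteSpace X]
    [NormedAddCommGroup Y] [NormedSpace ℝ Y]
    (P : X → Y) (P' : X → X →L[ℝ] Y) (x₀ : X) {K η : ℝ} (hK : 0 < K)
    (hd : ∀ z ∈ closedBall x₀ (2*η), HasFDerivAt P (P' z) z)
    (hL : ∀ u ∈ closedBall x₀ (2*η), ∀ w ∈ closedBall x₀ (2*η), ‖P' u - P' w‖ ≤ K * ‖u - w‖)
    (i₀ : Y →L[ℝ] X) (b₀ e₀ : ℝ) (h₀ : NGood P P' x₀ K η x₀ i₀ b₀ e₀) :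
    ∃ (x : ℕ → X) (inv : ℕ → Y →L[ℝ] X) (b e : ℕ → ℝ),
      x 0 = x₀ ∧ b 0 = b₀ ∧ e 0 = e₀ ∧
      (∀ k, NGood P P' x₀ K η (x k) (inv k) (b k) (e k)) ∧
      (∀ k, x (k+1) = x k - inv k (P (x k))) ∧
      (∀ k, b (k+1) = b k / (1 - b k * K * e k)) ∧
      (∀ k, e (k+1) = K/2 * (b k / (1 - b k * K * e k)) * (e k)^2) := by
  let Q := {q : X × (Y →L[ℝ] X) × ℝ × ℝ //
    NGood P P' x₀ K η q.1 q.2.1 q.2.2.1 q.2.2.2}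
  let F : Q → Q := fun q =>
    ⟨(q.1.1 - q.1.2.1 (P q.1.1),
      (newton_step P P' x₀ hK hd hL q.1.1 q.1.2.1 q.1.2.2.1 q.1.2.2.2 q.2).choose,
      q.1.2.2.1 / (1 - q.1.2.2.1 * K * q.1.2.2.2),
      K/2 * (q.1.2.2.1 / (1 - q.1.2.2.1 * K * q.1.2.2.2)) * q.1.2.2.2^2),
     (newton_step P P' x₀ hK hd hL q.1.1 q.1.2.1 q.1.2.2.1 q.1.2.2.2 q.2).choose_spec⟩
  let S : ℕ → Q := fun k => F^[k] ⟨(x₀, i₀, b₀, e₀), h₀⟩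
  have hsucc : ∀ k, S (k+1) = F (S k) := fun k => Function.iterate_succ_apply' F k _
  refine ⟨fun k => (S k).1.1, fun k => (S k).1.2.1, fun k => (S k).1.2.2.1,
    fun k => (S k).1.2.2.2, rfl, rfl, rfl, fun k => (S k).2, fun k => ?_, fun k => ?_,
    fun k => ?_⟩ <;> beta_reduce <;> rw [hsucc k] <;> rfl


open Filter

set_option maxHeartbeats 1000000 in
/-- Kantorovich's theorem on Newton's method: under the classical hypotheses,
the Newton iterates are well defined (each derivative along the iterates has a
bounded linear inverse), remain in the closed ball of radius `2η` around `x₀`,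
and converge to a zero `x*` of `P` in that ball, with the quadratic-convergence
error bound `‖x* − x_k‖ ≤ (η/h)·(2h)^(2^k)/2^k`. -/
theorem kantorovich_newton
    {X Y : Type*} [NormedAddCommGroup X] [NormedSpace ℝ X] [CompleteSpace X]
    [NormedAddCommGroup Y] [NormedSpace ℝ Y] [CompleteSpace Y]
    (P : X → Y) (P' : X → X →L[ℝ] Y)
    (D₀ : Set X) (hD₀open : IsOpen D₀) (hD₀conv : Convex ℝ D₀)
    (x₀ : X) (hx₀ : x₀ ∈ D₀)
    (hderiv : ∀ x ∈ D₀, HasFDerivAt P (P' x) x)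
    (B K η h : ℝ)
    (inv₀ : Y →L[ℝ] X)
    (hinv₀l : inv₀.comp (P' x₀) = ContinuousLinearMap.id ℝ X)
    (hinv₀r : (P' x₀).comp inv₀ = ContinuousLinearMap.id ℝ Y)
    (hB : ‖inv₀‖ ≤ B)
    (hη : ‖inv₀ (P x₀)‖ ≤ η)
    (hK : ∀ x ∈ D₀, ∀ y ∈ D₀, ‖P' x - P' y‖ ≤ K * ‖x - y‖)
    (hh : h = B * K * η) (hpos : 0 < h) (hhalf : h ≤ 1 / 2)
    (hball : Metric.closedBall x₀ (2 * η) ⊆ D₀) :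
    ∃ (x : ℕ → X) (inv : ℕ → (Y →L[ℝ] X)),
      x 0 = x₀ ∧
      (∀ k, (inv k).comp (P' (x k)) = ContinuousLinearMap.id ℝ X ∧
            (P' (x k)).comp (inv k) = ContinuousLinearMap.id ℝ Y) ∧
      (∀ k, x (k + 1) = x k - inv k (P (x k))) ∧
      (∀ k, ‖x k - x₀‖ ≤ 2 * η) ∧
      ∃ xs : X, ‖xs - x₀‖ ≤ 2 * η ∧ P xs = 0 ∧
        Tendsto x atTop (nhds xs) ∧
        ∀ k, ‖xs - x k‖ ≤ η / h * (2 * h) ^ (2 ^ k) / ((2 : ℝ) ^ k) := by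
  have hB0 : 0 ≤ B := le_trans (norm_nonneg _) hB
  have hη0 : 0 ≤ η := le_trans (norm_nonneg _) hη
  have hKpos : 0 < K := by nlinarith [mul_nonneg hB0 hη0]
  have hBpos : 0 < B := by nlinarith [mul_nonneg hKpos.le hη0]
  have hηpos : 0 < η := by nlinarith [mul_nonneg hB0 hKpos.le]
  have hd' : ∀ z ∈ closedBall x₀ (2*η), HasFDerivAt P (P' z) z :=
    fun z hz => hderiv z (hball hz)
  have hL' : ∀ u ∈ closedBall x₀ (2*η), ∀ w ∈ closedBall x₀ (2*η),
      ‖P' u - P' w‖ ≤ K * ‖u - w‖ := fun u hu w hw => hK u (hball hu) w (hball hw)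
  have h₀ : NGood P P' x₀ K η x₀ inv₀ B η :=
    ⟨hinv₀l, hinv₀r, hB, hη, hBpos, hη0, by rw [← hh]; exact hhalf, by simp⟩
  obtain ⟨x, inv, b, e, hx0, hb0eq, he0eq, hgood, hxrec, hbrec, herec⟩ :=
    newton_seq P P' x₀ hKpos hd' hL' inv₀ B η h₀
  have hbpos : ∀ k, 0 < b k := fun k => (hgood k).bpos
  have hepos : ∀ k, 0 ≤ e k := fun k => (hgood k).enonneg
  have hsh : ∀ k, b k * K * e k ≤ 1/2 := fun k => (hgood k).shalf
  have hs0 : ∀ k, 0 ≤ b k * K * e k :=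
    fun k => mul_nonneg (mul_nonneg (hbpos k).le hKpos.le) (hepos k)
  have hsne : ∀ k, (0:ℝ) < 1 - b k * K * e k := fun k => by linarith [hsh k]
  have heSE : ∀ k, e (k+1) ≤ (b k * K * e k) * e k := by
    intro k
    rw [herec k]
    have h10 : K/2 * (b k / (1 - b k*K*e k)) * (e k)^2
        = (b k*K*e k) * e k / (2*(1 - b k*K*e k)) := by
      field_simp
    rw [h10, div_le_iff₀ (by linarith [hsne k])]
    nlinarith [mul_nonneg (mul_nonneg (hs0 k) (hepos k)) (by linarith [hsh k] :
      (0:ℝ) ≤ 1 - 2*(b k*K*e k))]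
  have hehalf : ∀ k, e (k+1) ≤ e k / 2 := by
    intro k
    refine (heSE k).trans ?_
    nlinarith [mul_nonneg (hepos k) (by linarith [hsh k] : (0:ℝ) ≤ 1/2 - b k*K*e k)]
  have hsrec : ∀ k, 2 * (b (k+1) * K * e (k+1)) ≤ (2 * (b k * K * e k))^2 := by
    intro k
    rw [hbrec k, herec k]
    have h11 : b k / (1 - b k*K*e k) * K * (K/2 * (b k / (1 - b k*K*e k)) * (e k)^2)
        = (b k*K*e k)^2 / (2*(1 - b k*K*e k)^2) := by
      field_simp
    rw [h11]
    have h12 : 2 * ((b k*K*e k)^2 / (2*(1 - b k*K*e k)^2))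
        = (b k*K*e k)^2 / (1 - b k*K*e k)^2 := by
      have hd0 : (1 - b k*K*e k) ≠ 0 := ne_of_gt (hsne k)
      field_simp
    rw [h12, div_le_iff₀ (pow_pos (hsne k) 2)]
    have h4d : (0:ℝ) ≤ 4*(1 - b k*K*e k)^2 - 1 := by nlinarith [hsh k, hs0 k]
    nlinarith [mul_nonneg (sq_nonneg (b k*K*e k)) h4d]
  have h2h : 2*h ≤ 1 := by linarith
  have h2hpos : (0:ℝ) < 2*h := by linarith
  have hs_init : b 0 * K * e 0 = h := by rw [hb0eq, he0eq, hh]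
  have hyp : ∀ k, 2 * (b k * K * e k) ≤ (2*h)^(2^k) := by
    intro k
    induction k with
    | zero => rw [hs_init]; norm_num
    | succ k ih =>
      refine (hsrec k).trans ?_
      have h13 : (2*(b k*K*e k))^2 ≤ ((2*h)^(2^k))^2 := by
        apply pow_le_pow_left₀ (by linarith [hs0 k]) ih
      refine h13.trans (le_of_eq ?_)
      rw [← pow_mul]
      congr 1
  have hek : ∀ k, e k ≤ η/(2*h) * (2*h)^(2^k) / 2^k := by
    intro k
    induction k with
    | zero =>
      have h14 : η/(2*h) * (2*h)^(2^0) / 2^0 = η := by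
        norm_num
        field_simp
      rw [h14, he0eq]
      
    | succ k ih =>
      calc e (k+1) ≤ (b k*K*e k) * e k := heSE k
        _ ≤ ((2*h)^(2^k)/2) * (η/(2*h) * (2*h)^(2^k) / 2^k) := by
            apply mul_le_mul (by linarith [hyp k]) ih (hepos k) (by positivity)
        _ = η/(2*h) * (2*h)^(2^(k+1)) / 2^(k+1) := by
            have hp : (2*h)^(2^(k+1)) = (2*h)^(2^k) * (2*h)^(2^k) := by
              rw [← pow_add]
              congr 1
              rw [pow_succ, mul_two]
            rw [hp, pow_succ (2:ℝ) k]
            field_simp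
  have hgeo : ∀ k j, e (k+j) ≤ e k * (1/2)^j := by
    intro k j
    induction j with
    | zero => simp
    | succ j ih =>
      calc e (k+(j+1)) ≤ e (k+j) / 2 := hehalf _
        _ ≤ (e k * (1/2)^j)/2 := by linarith
        _ = e k * (1/2)^(j+1) := by rw [pow_succ]; ring
  have heη : ∀ k, e k ≤ η * (1/2)^k := by
    intro k
    have := hgeo 0 k
    simpa [he0eq] using this
  have hstepn : ∀ n, ‖x (n+1) - x n‖ ≤ e n := by
    intro n
    rw [hxrec n]
    have h15 : x n - inv n (P (x n)) - x n = -(inv n (P (x n))) := by abel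
    rw [h15, norm_neg]
    exact (hgood n).normie
  have htail : ∀ k j, ‖x (k+j) - x k‖ ≤ 2 * e k * (1 - (1/2)^j) := by
    intro k j
    induction j with
    | zero => simp
    | succ j ih =>
      have h16 : x (k+j+1) - x k = (x (k+j+1) - x (k+j)) + (x (k+j) - x k) := by abel
      have h17 : ‖x (k+(j+1)) - x k‖ ≤ ‖x (k+j+1) - x (k+j)‖ + ‖x (k+j) - x k‖ := by
        show ‖x (k+j+1) - x k‖ ≤ _
        rw [h16]
        exact norm_add_le _ _
      have h18 := (hstepn (k+j)).trans (hgeo k j)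
      have h19 : (1/2:ℝ)^(j+1) = (1/2)^j * (1/2) := pow_succ _ _
      rw [h19]
      nlinarith [h17, h18, ih]
  have hmem' : ∀ k, ‖x k - x₀‖ ≤ 2*η := by
    intro k
    have := (hgood k).inball
    linarith [hepos k]
  have hcauchy : CauchySeq x := by
    apply cauchySeq_of_le_geometric (1/2 : ℝ) η (by norm_num)
    intro n
    rw [dist_eq_norm]
    calc ‖x n - x (n+1)‖ = ‖x (n+1) - x n‖ := norm_sub_rev _ _
      _ ≤ e n := hstepn n
      _ ≤ η * (1/2)^n := heη n
  obtain ⟨xs, hxs⟩ := cauchySeq_tendsto_of_complete hcauchy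
  have hlim : ∀ k, ‖xs - x k‖ ≤ 2 * e k := by
    intro k
    have h20 : Tendsto (fun j => x (j+k)) atTop (nhds xs) :=
      hxs.comp (tendsto_add_atTop_nat k)
    have h21 : Tendsto (fun j => ‖x (j+k) - x k‖) atTop (nhds ‖xs - x k‖) :=
      (h20.sub tendsto_const_nhds).norm
    apply le_of_tendsto h21
    filter_upwards with j
    have h22 := htail k j
    rw [Nat.add_comm k j] at h22
    nlinarith [mul_nonneg (hepos k) (pow_nonneg (by norm_num : (0:ℝ) ≤ 1/2) j)]
  have hxs0 : ‖xs - x₀‖ ≤ 2*η := by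
    have := hlim 0
    rw [hx0, he0eq] at this
    exact this
  have hxsD : xs ∈ D₀ := by
    apply hball
    rw [Metric.mem_closedBall, dist_eq_norm]
    exact hxs0
  have hPxk : ∀ k, ‖P (x k)‖ ≤ (‖P' x₀‖ + K*(2*η)) * (η * (1/2)^k) := by
    intro k
    have hxkmem : x k ∈ closedBall x₀ (2*η) := by
      rw [Metric.mem_closedBall, dist_eq_norm]
      exact hmem' k
    have hx₀mem : x₀ ∈ closedBall x₀ (2*η) := by
      rw [Metric.mem_closedBall, dist_self]
      linarith
    have h23 : P (x k) = (P' (x k)) (inv k (P (x k))) := by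
      have := congrArg (fun f : Y →L[ℝ] Y => f (P (x k))) (hgood k).compr
      simpa using this.symm
    have h24 : ‖P' (x k)‖ ≤ ‖P' x₀‖ + K*(2*η) := by
      have h25 : ‖P' (x k) - P' x₀‖ ≤ K * ‖x k - x₀‖ := hL' (x k) hxkmem x₀ hx₀mem
      have h26 : ‖P' (x k)‖ ≤ ‖P' x₀‖ + ‖P' (x k) - P' x₀‖ := by
        calc ‖P' (x k)‖ = ‖P' x₀ + (P' (x k) - P' x₀)‖ := by rw [add_sub_cancel]
          _ ≤ ‖P' x₀‖ + ‖P' (x k) - P' x₀‖ := norm_add_le _ _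
      have h27 : K * ‖x k - x₀‖ ≤ K * (2*η) :=
        mul_le_mul_of_nonneg_left (hmem' k) hKpos.le
      linarith
    calc ‖P (x k)‖ = ‖(P' (x k)) (inv k (P (x k)))‖ := by rw [← h23]
      _ ≤ ‖P' (x k)‖ * ‖inv k (P (x k))‖ := ContinuousLinearMap.le_opNorm _ _
      _ ≤ (‖P' x₀‖ + K*(2*η)) * (η * (1/2)^k) := by
          apply mul_le_mul h24 ((hgood k).normie.trans (heη k)) (norm_nonneg _)
            (by positivity)
  have hgeo2 : Tendsto (fun k : ℕ => (‖P' x₀‖ + K*(2*η)) * (η * (1/2)^k)) atTop (nhds 0) := by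
    have h28 := (tendsto_pow_atTop_nhds_zero_of_lt_one (by norm_num : (0:ℝ) ≤ 1/2)
      (by norm_num : (1/2:ℝ) < 1)).const_mul ((‖P' x₀‖ + K*(2*η)) * η)
    simpa [mul_assoc] using h28
  have hP0 : Tendsto (fun k => P (x k)) atTop (nhds 0) :=
    squeeze_zero_norm hPxk hgeo2
  have hPcont : Tendsto (fun k => P (x k)) atTop (nhds (P xs)) :=
    ((hderiv xs hxsD).continuousAt.tendsto).comp hxs
  have hPxs : P xs = 0 := tendsto_nhds_unique hPcont hP0
  refine ⟨x, inv, hx0, fun k => ⟨(hgood k).compl, (hgood k).compr⟩, hxrec, hmem',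
    xs, hxs0, hPxs, hxs, fun k => ?_⟩
  have h29 := hlim k
  have h30 := hek k
  have h31 : 2 * (η/(2*h) * (2*h)^(2^k) / 2^k) = η/h * (2*h)^(2^k) / 2^k := by
    field_simp
  linarith
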